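/- Let M ∈ K^{σ×σ} be a Jordan matrix with blocks ((x_1,σ_1),…,(x_n,σ_n)) (block j of size σ_j with eigenvalue x_j), let P ∈ K[X]^{m×m}, and E ∈ K^{m×σ} with column blocks E_j ∈ K^{m×σ_j}. For each j, let e_j(X) = E_j·(1,X,…,X^{σ_j−1})ᵀ ∈ K[X]^{m×1} and f_j(X) = P(X+x_j)·e_j(X) mod X^{σ_j}. Then P·E = F where F's j-th column block is the matrix of coefficients of degrees 0,…,σ_j−1 of f_j. -/

import Mathlib

open Polynomial Matrix

/-- The Jordan matrix with blocks of sizes `σs j` and eigenvalues `x j` (each block is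
upper triangular with the eigenvalue on the diagonal and `1` on the superdiagonal). -/
def jordanMat {K : Type*} [Field K] {n : ℕ} (σs : Fin n → ℕ) (x : Fin n → K) :
    Matrix ((j : Fin n) × Fin (σs j)) ((j : Fin n) × Fin (σs j)) K :=
  fun a b =>
    if a.1 = b.1 then
      if (a.2 : ℕ) = (b.2 : ℕ) then x a.1
      else if (a.2 : ℕ) + 1 = (b.2 : ℕ) then 1 else 0
    else 0

section Aux

variable {K : Type*} [Field K]

/-- The nilpotent shift matrix. -/
def nilShift (K : Type*) [Field K] (σ : ℕ) : Matrix (Fin σ) (Fin σ) K :=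
  Matrix.of fun a b => if (a : ℕ) + 1 = (b : ℕ) then 1 else 0

lemma nilShift_pow_apply (σ k : ℕ) (a b : Fin σ) :
    ((nilShift K σ) ^ k) a b = if (a : ℕ) + k = (b : ℕ) then 1 else 0 := by
  induction k generalizing b with
  | zero => simp [Matrix.one_apply, Fin.ext_iff]
  | succ k ih =>
    rw [pow_succ, Matrix.mul_apply]
    by_cases hb : (a : ℕ) + (k + 1) = (b : ℕ)
    · have hc : (a : ℕ) + k < σ := by omega
      rw [Finset.sum_eq_single (⟨(a : ℕ) + k, hc⟩ : Fin σ)]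
      · rw [ih]
        simp only [nilShift, Matrix.of_apply, Fin.val_mk]
        rw [if_pos trivial, if_pos (by omega : ↑a + k + 1 = (b : ℕ)), one_mul, if_pos hb]
      · intro c _ hne
        have h : (a : ℕ) + k ≠ (c : ℕ) := fun h => hne (Fin.ext h.symm)
        simp [ih, h]
      · intro h; exact absurd (Finset.mem_univ _) h
    · rw [if_neg hb]
      apply Finset.sum_eq_zero
      intro c _
      by_cases h1 : (a : ℕ) + k = (c : ℕ)
      · have h2 : (c : ℕ) + 1 ≠ (b : ℕ) := by omega
        simp [nilShift, h2]
      · simp [ih, h1]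

lemma aeval_nilShift_apply (σ : ℕ) (q : K[X]) (a b : Fin σ) :
    (Polynomial.aeval (nilShift K σ) q) a b
      = if (a : ℕ) ≤ (b : ℕ) then q.coeff ((b : ℕ) - (a : ℕ)) else 0 := by
  rw [Polynomial.aeval_eq_sum_range, Matrix.sum_apply]
  simp only [Matrix.smul_apply, nilShift_pow_apply, smul_eq_mul, mul_ite, mul_one, mul_zero]
  by_cases hab : (a : ℕ) ≤ (b : ℕ)
  · rw [if_pos hab]
    by_cases hdeg : (b : ℕ) - (a : ℕ) < q.natDegree + 1
    · rw [Finset.sum_eq_single ((b : ℕ) - (a : ℕ))]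
      · rw [if_pos (by omega)]
      · intro i _ hne; rw [if_neg (by omega)]
      · intro h; exact absurd (Finset.mem_range.mpr hdeg) h
    · rw [Finset.sum_eq_zero, Polynomial.coeff_eq_zero_of_natDegree_lt (by omega)]
      intro i hi
      rw [Finset.mem_range] at hi
      rw [if_neg (by omega)]
  · rw [if_neg hab]
    apply Finset.sum_eq_zero
    intro i _
    rw [if_neg (by omega)]

/-- A single Jordan block. -/
def jblock (K : Type*) [Field K] (σ : ℕ) (x : K) : Matrix (Fin σ) (Fin σ) K :=
  Matrix.of fun a b =>
    if (a : ℕ) = (b : ℕ) then x else if (a : ℕ) + 1 = (b : ℕ) then 1 else 0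

lemma jblock_eq (σ : ℕ) (x : K) :
    jblock K σ x = Polynomial.aeval (nilShift K σ) (Polynomial.X + Polynomial.C x) := by
  ext a b
  rw [map_add, Polynomial.aeval_X, Polynomial.aeval_C]
  rw [Matrix.add_apply, Matrix.algebraMap_matrix_apply]
  by_cases h : a = b
  · subst h
    simp [jblock, nilShift]
  · have h' : (a : ℕ) ≠ (b : ℕ) := fun hh => h (Fin.ext hh)
    simp [jblock, nilShift, h, h']

lemma aeval_jblock_apply (σ : ℕ) (x : K) (q : K[X]) (a b : Fin σ) :
    (Polynomial.aeval (jblock K σ x) q) a b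
      = if (a : ℕ) ≤ (b : ℕ) then
          (q.comp (Polynomial.X + Polynomial.C x)).coeff ((b : ℕ) - (a : ℕ)) else 0 := by
  rw [jblock_eq, ← Polynomial.aeval_comp, aeval_nilShift_apply]

lemma jordanMat_eq {n : ℕ} (σs : Fin n → ℕ) (x : Fin n → K) :
    jordanMat σs x = Matrix.blockDiagonal' (fun j => jblock K (σs j) (x j)) := by
  ext ⟨j, e⟩ ⟨j', d⟩
  rcases eq_or_ne j j' with rfl | h
  · rw [Matrix.blockDiagonal'_apply_eq]
    simp [jordanMat, jblock]
  · rw [Matrix.blockDiagonal'_apply_ne _ _ _ h]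
    simp [jordanMat, h]

/-- `blockDiagonal'` as an `AlgHom`. -/
def bdAlgHom {n : ℕ} (σs : Fin n → ℕ) :
    ((j : Fin n) → Matrix (Fin (σs j)) (Fin (σs j)) K)
      →ₐ[K] Matrix ((j : Fin n) × Fin (σs j)) ((j : Fin n) × Fin (σs j)) K :=
  { Matrix.blockDiagonal'RingHom (fun j => Fin (σs j)) K with
    commutes' := fun r => by
      show Matrix.blockDiagonal' (algebraMap K _ r) = algebraMap K _ r
      rw [Algebra.algebraMap_eq_smul_one, Algebra.algebraMap_eq_smul_one]
      rw [← Matrix.blockDiagonal'_one (α := K) (m' := fun j => Fin (σs j))]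
      rw [← Matrix.blockDiagonal'_smul] }

lemma aeval_blockDiagonal' {n : ℕ} {σs : Fin n → ℕ}
    (M : ∀ j, Matrix (Fin (σs j)) (Fin (σs j)) K) (p : K[X]) :
    Polynomial.aeval (Matrix.blockDiagonal' M) p
      = Matrix.blockDiagonal' (fun j => Polynomial.aeval (M j) p) := by
  have h1 : Matrix.blockDiagonal' M = bdAlgHom σs M := rfl
  have h2 : (Polynomial.aeval M p : (j : Fin n) → Matrix (Fin (σs j)) (Fin (σs j)) K)
      = fun j => Polynomial.aeval (M j) p :=
    funext fun j' => (Polynomial.aeval_algHom_apply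
      (Pi.evalAlgHom K (fun j => Matrix (Fin (σs j)) (Fin (σs j)) K) j') M p).symm
  rw [h1, Polynomial.aeval_algHom_apply]
  show Matrix.blockDiagonal' (Polynomial.aeval M p) = _
  rw [h2]

lemma coeff_modByMonic_X_pow (p : K[X]) {σ d : ℕ} (hd : d < σ) :
    (p %ₘ Polynomial.X ^ σ).coeff d = p.coeff d := by
  conv_rhs => rw [← Polynomial.modByMonic_add_div p (Polynomial.X ^ σ)]
  rw [Polynomial.coeff_add, mul_comm, Polynomial.coeff_mul_X_pow', if_neg (by omega), add_zero]

end Aux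

/-- computing the residual `P·E` for a Jordan multiplication matrix. For
each block `j`, with `e_j(X) = E_j·(1,X,…,X^{σ_j−1})ᵀ` and
`f_j = P(X+x_j)·e_j mod X^{σ_j}`, the column block `j` of `P·E` is given by the
coefficients of degrees `0,…,σ_j−1` of `f_j`. -/
theorem residual_formula_jordan
    {K : Type*} [Field K] {m n : ℕ} (σs : Fin n → ℕ) (hσs : ∀ j, 0 < σs j)
    (x : Fin n → K)
    (E : Matrix (Fin m) ((j : Fin n) × Fin (σs j)) K)
    (P : Matrix (Fin m) (Fin m) (Polynomial K)) :
    ∀ (i : Fin m) (j : Fin n) (d : Fin (σs j)),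
      (∑ c, Matrix.vecMul (E c) (Polynomial.aeval (jordanMat σs x) (P i c))) ⟨j, d⟩ =
        ((∑ c, ((P i c).comp (Polynomial.X + Polynomial.C (x j))) *
            (∑ e : Fin (σs j), Polynomial.C (E c ⟨j, e⟩) * Polynomial.X ^ (e : ℕ)))
          %ₘ (Polynomial.X ^ (σs j))).coeff (d : ℕ) := by
  intro i j d
  -- simplify the RHS
  rw [coeff_modByMonic_X_pow _ d.isLt, Polynomial.finset_sum_coeff]
  -- both sides are sums over c
  rw [Finset.sum_apply]
  refine Finset.sum_congr rfl fun c _ => ?_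
  -- RHS for a fixed c
  rw [Finset.mul_sum, Polynomial.finset_sum_coeff]
  have hrhs : ∀ e : Fin (σs j),
      (((P i c).comp (Polynomial.X + Polynomial.C (x j))) *
        (Polynomial.C (E c ⟨j, e⟩) * Polynomial.X ^ (e : ℕ))).coeff (d : ℕ)
      = if (e : ℕ) ≤ (d : ℕ) then
          E c ⟨j, e⟩ *
            ((P i c).comp (Polynomial.X + Polynomial.C (x j))).coeff ((d : ℕ) - (e : ℕ))
        else 0 := by
    intro e
    rw [← mul_assoc, Polynomial.coeff_mul_X_pow']
    by_cases he : (e : ℕ) ≤ (d : ℕ)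
    · rw [if_pos he, if_pos he, Polynomial.coeff_mul_C, mul_comm]
    · rw [if_neg he, if_neg he]
  simp only [hrhs]
  -- LHS for a fixed c
  rw [Matrix.vecMul, jordanMat_eq, aeval_blockDiagonal']
  show (∑ a : (j : Fin n) × Fin (σs j), E c a *
      Matrix.blockDiagonal' (fun j' => Polynomial.aeval (jblock K (σs j') (x j')) (P i c))
        a ⟨j, d⟩) = _
  rw [← Finset.univ_sigma_univ, Finset.sum_sigma]
  rw [Finset.sum_eq_single j]
  · refine Finset.sum_congr rfl fun e _ => ?_
    rw [Matrix.blockDiagonal'_apply_eq, aeval_jblock_apply, mul_ite, mul_zero]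
  · intro j' _ hne
    apply Finset.sum_eq_zero
    intro e _
    rw [Matrix.blockDiagonal'_apply_ne _ _ _ hne, mul_zero]
  · intro h; exact absurd (Finset.mem_univ _) h
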